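/- arXiv:1911.06435 — 3 statements merged into one kernel-verified Lean document; each statement's English description precedes it below -/
import Mathlib

section
/- Let p ∈ Q^d with all p_i ≥ 0 and ∑ p_i > 1, and suppose V = 1/(∑ p_i - 1) is a positive integer and n = V·p ∈ N^d. Let J be a proper subset of {1,...,d} and s a positive integer such that ∑_{i∈J} p_i − s·∑_{i=1}^d p_i ∈ Z. Then either ∑_{i∈J} n_i ≤ s, or n_i = 0 for all i ∉ J. -/
/-- Lemma 4.6 in rational form. If ∑_{i∈J} p_i − s·∑ p_i ∈ ℤ for a proper
subset J and positive integer s, then either ∑_{i∈J} n_i ≤ s or n_i = 0 for all i ∉ J. -/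
theorem stmt_4 (d : ℕ) (p : Fin d → ℚ) (hp : ∀ i, 0 ≤ p i) (hS : 1 < ∑ i, p i)
    (V : ℕ) (hVpos : 0 < V) (hV : (V : ℚ) = ((∑ i, p i) - 1)⁻¹)
    (n : Fin d → ℕ) (hn : ∀ i, (n i : ℚ) = (V : ℚ) * p i)
    (J : Finset (Fin d)) (hJ : J ≠ Finset.univ)
    (s : ℕ) (hs : 0 < s)
    (hint : ∃ z : ℤ, (∑ i ∈ J, p i) - (s : ℚ) * ∑ i, p i = (z : ℚ)) :
    (∑ i ∈ J, n i) ≤ s ∨ ∀ i ∉ J, n i = 0 := by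
  obtain ⟨z, hz⟩ := hint
  set S := ∑ i, p i with hSdef
  have hSne : S - 1 ≠ 0 := sub_ne_zero.mpr (ne_of_gt hS)
  have hVS : (V : ℚ) * S = V + 1 := by
    rw [hV]
    field_simp
    ring
  -- total sum of n is V + 1
  have htot : (∑ i, n i) = V + 1 := by
    have : ((∑ i, n i : ℕ) : ℚ) = ((V + 1 : ℕ) : ℚ) := by
      push_cast
      rw [Finset.sum_congr rfl fun i _ => hn i, ← Finset.mul_sum, hVS]
    exact_mod_cast this
  -- sum over J as integer
  have hJsum : ((∑ i ∈ J, n i : ℕ) : ℤ) = s * (V + 1) + V * z := by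
    have : ((∑ i ∈ J, n i : ℕ) : ℚ) = (s : ℚ) * (V + 1) + V * z := by
      push_cast
      rw [Finset.sum_congr rfl fun i _ => hn i, ← Finset.mul_sum]
      linear_combination (V:ℚ) * hz + (s:ℚ) * hVS
    exact_mod_cast this
  by_cases hle : (∑ i ∈ J, n i) ≤ s
  · exact Or.inl hle
  · right
    push_neg at hle
    -- ∑_J n - s = V * (s + z) > 0, so ≥ V, hence ∑_J n ≥ s + V ≥ V + 1
    have hA : ((∑ i ∈ J, n i : ℕ) : ℤ) - s = V * (s + z) := by
      rw [hJsum]; ring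
    have hlt : (s : ℤ) < ((∑ i ∈ J, n i : ℕ) : ℤ) := by exact_mod_cast hle
    have hpos : (0 : ℤ) < V * (s + z) := by rw [← hA]; linarith
    have hsz : (1 : ℤ) ≤ s + z := by
      by_contra h
      push_neg at h
      have h0 : s + z ≤ 0 := by omega
      nlinarith [(Nat.cast_pos.mpr hVpos : (0:ℤ) < V)]
    have hge : (V + 1 : ℤ) ≤ ((∑ i ∈ J, n i : ℕ) : ℤ) := by
      have : (V : ℤ) ≤ V * (s + z) := le_mul_of_one_le_right (by positivity) hsz
      have hs' : (1 : ℤ) ≤ s := by exact_mod_cast hs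
      omega
    -- but ∑_J n ≤ ∑ all n = V + 1
    have hle2 : (∑ i ∈ J, n i) ≤ ∑ i, n i :=
      Finset.sum_le_sum_of_subset (Finset.subset_univ J)
    have heq : (∑ i ∈ J, n i) = V + 1 := by
      rw [htot] at hle2
      have : (V + 1 : ℕ) ≤ ∑ i ∈ J, n i := by exact_mod_cast hge
      omega
    have hzero : ∑ i ∈ Jᶜ, n i = 0 := by
      have := Finset.sum_add_sum_compl J n
      omega
    intro i hi
    exact Finset.sum_eq_zero_iff.mp hzero i (Finset.mem_compl.mpr hi)
end

section
/- Let p ∈ R^d with p_i ≥ 0 for all i and ∑ p_i > 1; set V = 1/(∑ p_i − 1) and n = V·p. Suppose a ∈ R^d satisfies a·p ≥ 1 and a·e_i ≤ 1 for all i (i.e., a_i ≤ 1). Then for any index i with a_i < 1, n_i ≤ 1/(1 − a_i). -/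
/-- Per-coordinate weight bound: if a·p ≥ 1 and a_i ≤ 1 for all i, then
for any i with a_i < 1 one has n_i ≤ 1/(1 - a_i), where n = V • p, V = 1/(∑ p_i - 1). -/
theorem stmt_10 (d : ℕ) (p : Fin d → ℝ) (hp : ∀ i, 0 ≤ p i) (hS : 1 < ∑ i, p i)
    (V : ℝ) (hV : V = ((∑ i, p i) - 1)⁻¹) (n : Fin d → ℝ) (hn : n = V • p)
    (a : Fin d → ℝ) (hap : 1 ≤ ∑ i, a i * p i) (ha : ∀ i, a i ≤ 1) :
    ∀ i, a i < 1 → n i ≤ 1 / (1 - a i) := by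
  intro i hi
  have hSpos : 0 < (∑ i, p i) - 1 := by linarith
  have key : (1 - a i) * p i ≤ (∑ j, p j) - 1 := by
    have h1 : (1 - a i) * p i ≤ ∑ j, (1 - a j) * p j := by
      apply Finset.single_le_sum (f := fun j => (1 - a j) * p j)
      · intro j _
        exact mul_nonneg (by linarith [ha j]) (hp j)
      · exact Finset.mem_univ i
    have h2 : ∑ j, (1 - a j) * p j = (∑ j, p j) - ∑ j, a j * p j := by
      rw [← Finset.sum_sub_distrib]; congr 1; ext j; ring
    linarith
  have : n i = p i / ((∑ j, p j) - 1) := by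
    rw [hn, hV]; simp [div_eq_inv_mul, mul_comm]
  rw [this, div_le_div_iff₀ hSpos (by linarith)]
  nlinarith
end

section
/- For every V ∈ N coprime to 30, the simplex Conv{e_1, e_2, e_3, e_4, (V−30, 6, 10, 15)} in R^4 is empty with respect to Z^4 provided V ≥ 31; more precisely, the only points of Z^4 in this simplex are its five vertices. -/
lemma aux_ge (V x a : ℤ) (hV : 0 < V) (h : a ≤ V * x) : a + (-a) % V ≤ V * x := by
  have hD : 0 ≤ V * x - a := by linarith
  have h1 : (V * x - a) % V = (-a) % V := by
    have : V * x - a = -a + V * x := by ring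
    rw [this, Int.add_mul_emod_self_left]
  have h2 : (V * x - a) % V ≤ V * x - a := by
    have hq : 0 ≤ (V * x - a) / V := Int.ediv_nonneg hD hV.le
    have := Int.emod_def (V * x - a) V
    nlinarith [this]
  linarith [h1 ▸ h2]

lemma aux_key (V k z0 z1 z2 z3 : ℤ) (hV : 31 ≤ V)
    (hcop : ∀ m : ℤ, m ∣ 30 → 0 < m → V ∣ m * k → V ∣ k)
    (hk1 : 1 ≤ k) (hk2 : k ≤ V - 1)
    (h0 : k * (V - 30) ≤ V * z0) (h1 : 6 * k ≤ V * z1)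
    (h2 : 10 * k ≤ V * z2) (h3 : 15 * k ≤ V * z3)
    (hsum : z0 + z1 + z2 + z3 = k + 1) : False := by
  have hVpos : (0:ℤ) < V := by linarith
  set p := (-(6 * k)) % V with hp
  set q := (-(10 * k)) % V with hq
  set r := (-(15 * k)) % V with hr
  set s := (30 * k) % V with hs
  have hp0 : 0 ≤ p := Int.emod_nonneg _ hVpos.ne'
  have hq0 : 0 ≤ q := Int.emod_nonneg _ hVpos.ne'
  have hr0 : 0 ≤ r := Int.emod_nonneg _ hVpos.ne'
  have hs0 : 0 ≤ s := Int.emod_nonneg _ hVpos.ne'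
  have hsV : s < V := Int.emod_lt_of_pos _ hVpos
  -- nonzero residues
  have hndvd : ∀ m : ℤ, m ∣ 30 → 0 < m → ¬ (V ∣ m * k) := by
    intro m hm hmpos hdvd
    have := hcop m hm hmpos hdvd
    have := Int.le_of_dvd (by linarith) this
    linarith
  have hpne : p ≠ 0 := by
    intro h
    have : V ∣ -(6 * k) := Int.dvd_of_emod_eq_zero (by rw [← hp, h])
    exact hndvd 6 (by norm_num) (by norm_num) ((dvd_neg).mp this)
  have hqne : q ≠ 0 := by
    intro h
    have : V ∣ -(10 * k) := Int.dvd_of_emod_eq_zero (by rw [← hq, h])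
    exact hndvd 10 (by norm_num) (by norm_num) ((dvd_neg).mp this)
  have hrne : r ≠ 0 := by
    intro h
    have : V ∣ -(15 * k) := Int.dvd_of_emod_eq_zero (by rw [← hr, h])
    exact hndvd 15 (by norm_num) (by norm_num) ((dvd_neg).mp this)
  -- improved coordinate bounds
  have H1 : 6 * k + p ≤ V * z1 := aux_ge V z1 (6 * k) hVpos h1
  have H2 : 10 * k + q ≤ V * z2 := aux_ge V z2 (10 * k) hVpos h2
  have H3 : 15 * k + r ≤ V * z3 := aux_ge V z3 (15 * k) hVpos h3
  have H0 : k * (V - 30) + s ≤ V * z0 := by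
    have := aux_ge V z0 (k * (V - 30)) hVpos h0
    have he : (-(k * (V - 30))) % V = s := by
      have : -(k * (V - 30)) = 30 * k + V * (-k) := by ring
      rw [this, Int.add_mul_emod_self_left]
    rw [he] at this; exact this

  have hpm : p ≡ -(6*k) [ZMOD V] := Int.emod_emod_of_dvd _ dvd_rfl
  have hqm : q ≡ -(10*k) [ZMOD V] := Int.emod_emod_of_dvd _ dvd_rfl
  have hrm : r ≡ -(15*k) [ZMOD V] := Int.emod_emod_of_dvd _ dvd_rfl
  have hsm : s ≡ 30*k [ZMOD V] := Int.emod_emod_of_dvd _ dvd_rfl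
  have hd1 : V ∣ 5 * p + s := by
    have h := (hpm.mul_left 5).add hsm
    have he : 5 * -(6*k) + 30*k = 0 := by ring
    rw [he] at h
    exact (Int.modEq_zero_iff_dvd).mp h
  have hd2 : V ∣ 3 * q + s := by
    have h := (hqm.mul_left 3).add hsm
    have he : 3 * -(10*k) + 30*k = 0 := by ring
    rw [he] at h
    exact (Int.modEq_zero_iff_dvd).mp h
  have hd3 : V ∣ 2 * r + s := by
    have h := (hrm.mul_left 2).add hsm
    have he : 2 * -(15*k) + 30*k = 0 := by ring
    rw [he] at h
    exact (Int.modEq_zero_iff_dvd).mp h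
  have hppos : 0 < p := lt_of_le_of_ne hp0 (Ne.symm hpne)
  have hqpos : 0 < q := lt_of_le_of_ne hq0 (Ne.symm hqne)
  have hrpos : 0 < r := lt_of_le_of_ne hr0 (Ne.symm hrne)
  have hb1 : V ≤ 5 * p + s := Int.le_of_dvd (by linarith) hd1
  have hb2 : V ≤ 3 * q + s := Int.le_of_dvd (by linarith) hd2
  have hb3 : V ≤ 2 * r + s := Int.le_of_dvd (by linarith) hd3
  have hmul : V * z0 + V * z1 + V * z2 + V * z3 = V * (k + 1) := by
    rw [← hsum]; ring
  linarith [H0, H1, H2, H3, hb1, hb2, hb3, hmul]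



/-- For V coprime to 30 with V ≥ 31, the simplex
Conv{e_1, e_2, e_3, e_4, (V−30, 6, 10, 15)} ⊂ ℝ⁴ is empty with respect to ℤ⁴:
its only lattice points are its five vertices. -/
theorem stmt_16 (V : ℕ) (hcop : Nat.Coprime V 30) (hV : 31 ≤ V) :
    ∀ z : Fin 4 → ℤ,
      (fun i => (z i : ℝ)) ∈ convexHull ℝ
        (insert (![(V : ℝ) - 30, 6, 10, 15] : Fin 4 → ℝ)
          (Set.range fun i => (Pi.single i 1 : Fin 4 → ℝ))) →
      (fun i => (z i : ℝ)) ∈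
        insert (![(V : ℝ) - 30, 6, 10, 15] : Fin 4 → ℝ)
          (Set.range fun i => (Pi.single i 1 : Fin 4 → ℝ)) := by
  intro z hz
  set n : Fin 4 → ℝ := ![(V : ℝ) - 30, 6, 10, 15] with hn
  set e : Fin 4 → (Fin 4 → ℝ) := fun i => (Pi.single i 1 : Fin 4 → ℝ) with he
  have hset : insert n (Set.range e) = Set.range (Fin.cons n e : Fin 5 → (Fin 4 → ℝ)) :=
    (Fin.range_cons n e).symm
  rw [hset, convexHull_range_eq_exists_affineCombination] at hz
  obtain ⟨s, w, hw0, hw1, hx⟩ := hz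
  rw [Finset.affineCombination_eq_linear_combination _ _ _ hw1] at hx
  set W : Fin 5 → ℝ := fun i => if i ∈ s then w i else 0 with hW
  have hW0 : ∀ i, 0 ≤ W i := by
    intro i; by_cases h : i ∈ s <;> simp [hW, h, hw0 i]
  have hW1 : ∑ i, W i = 1 := by
    rw [hW, Finset.sum_ite_mem, Finset.univ_inter, hw1]
  have hWx : ∑ i, W i • (Fin.cons n e : Fin 5 → (Fin 4 → ℝ)) i = (fun i => (z i : ℝ)) := by
    rw [hW, ← hx]
    simp only [ite_smul, zero_smul]
    rw [Finset.sum_ite_mem, Finset.univ_inter]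
  -- coordinates
  have key : ∀ j : Fin 4, (z j : ℝ) = W 0 * n j + W j.succ := by
    intro j
    have hj := congrFun hWx j
    rw [← hj]
    rw [Finset.sum_apply]
    rw [Fin.sum_univ_succ]
    simp only [Fin.cons_zero, Fin.cons_succ, Pi.smul_apply, smul_eq_mul]
    congr 1
    rw [he]
    simp [Pi.single_apply]
  have hWsum : W 0 + (W 1 + W 2 + W 3 + W 4) = 1 := by
    rw [← hW1, Fin.sum_univ_five]; ring
  set t : ℝ := W 0 with ht
  have ht0 : 0 ≤ t := hW0 0
  have hu1 : 0 ≤ W 1 := hW0 1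
  have hu2 : 0 ≤ W 2 := hW0 2
  have hu3 : 0 ≤ W 3 := hW0 3
  have hu4 : 0 ≤ W 4 := hW0 4
  have ht1 : t ≤ 1 := by linarith
  have e0 : (z 0 : ℝ) = t * ((V : ℝ) - 30) + W 1 := by
    have h := key 0; rw [hn] at h; exact h
  have e1 : (z 1 : ℝ) = t * 6 + W 2 := by
    have h := key 1; rw [hn] at h; exact h
  have e2 : (z 2 : ℝ) = t * 10 + W 3 := by
    have h := key 2; rw [hn] at h; exact h
  have e3 : (z 3 : ℝ) = t * 15 + W 4 := by
    have h := key 3; rw [hn] at h; exact h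
  have hVpos : (0:ℝ) < V := by positivity
  -- the integer k with k = t * V
  set k : ℤ := z 0 + z 1 + z 2 + z 3 - 1 with hk
  have hkr : (k : ℝ) = t * V := by
    push_cast [hk]
    linarith [e0, e1, e2, e3, hWsum]
  have hk0 : 0 ≤ k := by
    have : (0:ℝ) ≤ (k:ℝ) := by rw [hkr]; positivity
    exact_mod_cast this
  have hkV : k ≤ (V : ℤ) := by
    have : (k:ℝ) ≤ (V:ℝ) := by rw [hkr]; nlinarith
    exact_mod_cast this
  rcases eq_or_lt_of_le hk0 with hzero | hpos
  · -- k = 0 : t = 0, z is a standard basis vector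
    have htz : t = 0 := by
      have h0 : t * V = 0 := by rw [← hkr, ← hzero]; norm_num
      rcases mul_eq_zero.mp h0 with h | h
      · exact h
      · exact absurd h (by positivity)
    have hz0 : 0 ≤ z 0 := by
      have : (0:ℝ) ≤ (z 0 : ℝ) := by rw [e0, htz]; linarith
      exact_mod_cast this
    have hz1 : 0 ≤ z 1 := by
      have : (0:ℝ) ≤ (z 1 : ℝ) := by rw [e1, htz]; linarith
      exact_mod_cast this
    have hz2 : 0 ≤ z 2 := by
      have : (0:ℝ) ≤ (z 2 : ℝ) := by rw [e2, htz]; linarith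
      exact_mod_cast this
    have hz3 : 0 ≤ z 3 := by
      have : (0:ℝ) ≤ (z 3 : ℝ) := by rw [e3, htz]; linarith
      exact_mod_cast this
    have hsum1 : z 0 + z 1 + z 2 + z 3 = 1 := by omega
    have hcases : (z 0 = 1 ∧ z 1 = 0 ∧ z 2 = 0 ∧ z 3 = 0) ∨
        (z 0 = 0 ∧ z 1 = 1 ∧ z 2 = 0 ∧ z 3 = 0) ∨
        (z 0 = 0 ∧ z 1 = 0 ∧ z 2 = 1 ∧ z 3 = 0) ∨
        (z 0 = 0 ∧ z 1 = 0 ∧ z 2 = 0 ∧ z 3 = 1) := by omega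
    rcases hcases with ⟨a,b,c,d⟩ | ⟨a,b,c,d⟩ | ⟨a,b,c,d⟩ | ⟨a,b,c,d⟩
    · exact Set.mem_insert_iff.mpr (Or.inr ⟨0, by
        funext j; fin_cases j <;> simp [he, Pi.single_apply, a, b, c, d]⟩)
    · exact Set.mem_insert_iff.mpr (Or.inr ⟨1, by
        funext j; fin_cases j <;> simp [he, Pi.single_apply, a, b, c, d]⟩)
    · exact Set.mem_insert_iff.mpr (Or.inr ⟨2, by
        funext j; fin_cases j <;> simp [he, Pi.single_apply, a, b, c, d]⟩)
    · exact Set.mem_insert_iff.mpr (Or.inr ⟨3, by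
        funext j; fin_cases j <;> simp [he, Pi.single_apply, a, b, c, d]⟩)
  · rcases eq_or_lt_of_le hkV with hVk | hklt
    · -- k = V : t = 1, z = n
      have htone : t = 1 := by
        have h0 : t * V = V := by rw [← hkr, hVk]; push_cast; ring
        have h1 : t * (V:ℝ) = 1 * (V:ℝ) := by rw [h0]; ring
        exact mul_right_cancel₀ (ne_of_gt hVpos) h1
      have hw4 : W 1 = 0 ∧ W 2 = 0 ∧ W 3 = 0 ∧ W 4 = 0 := by
        constructor; · linarith
        constructor; · linarith
        constructor; · linarith
        linarith
      obtain ⟨w1, w2, w3, w4⟩ := hw4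
      refine Set.mem_insert_iff.mpr (Or.inl ?_)
      funext j
      fin_cases j
      · show (z 0 : ℝ) = n 0; rw [hn]; show (z 0:ℝ) = (V:ℝ) - 30; rw [e0, htone, w1]; ring
      · show (z 1 : ℝ) = n 1; rw [hn]; show (z 1:ℝ) = 6; rw [e1, htone, w2]; ring
      · show (z 2 : ℝ) = n 2; rw [hn]; show (z 2:ℝ) = 10; rw [e2, htone, w3]; ring
      · show (z 3 : ℝ) = n 3; rw [hn]; show (z 3:ℝ) = 15; rw [e3, htone, w4]; ring
    · -- 1 ≤ k ≤ V - 1 : contradiction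
      exfalso
      have hVle : (0:ℝ) ≤ (V:ℝ) := le_of_lt hVpos
      have hVz1 : 6 * k ≤ (V:ℤ) * z 1 := by
        have hb : t * 6 ≤ (z 1 : ℝ) := by linarith
        have hm := mul_le_mul_of_nonneg_left hb hVle
        have : (6:ℝ) * (k:ℝ) ≤ (V:ℝ) * (z 1 : ℝ) := by rw [hkr]; linarith [hm]
        exact_mod_cast this
      have hVz2 : 10 * k ≤ (V:ℤ) * z 2 := by
        have hb : t * 10 ≤ (z 2 : ℝ) := by linarith
        have hm := mul_le_mul_of_nonneg_left hb hVle
        have : (10:ℝ) * (k:ℝ) ≤ (V:ℝ) * (z 2 : ℝ) := by rw [hkr]; linarith [hm]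
        exact_mod_cast this
      have hVz3 : 15 * k ≤ (V:ℤ) * z 3 := by
        have hb : t * 15 ≤ (z 3 : ℝ) := by linarith
        have hm := mul_le_mul_of_nonneg_left hb hVle
        have : (15:ℝ) * (k:ℝ) ≤ (V:ℝ) * (z 3 : ℝ) := by rw [hkr]; linarith [hm]
        exact_mod_cast this
      have hVz0 : k * ((V:ℤ) - 30) ≤ (V:ℤ) * z 0 := by
        have hb : t * ((V:ℝ) - 30) ≤ (z 0 : ℝ) := by linarith
        have hm := mul_le_mul_of_nonneg_left hb hVle
        have hc : ((k * ((V:ℤ) - 30) : ℤ) : ℝ) ≤ (((V:ℤ) * z 0 : ℤ) : ℝ) := by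
          push_cast
          rw [hkr]; linarith [hm]
        exact_mod_cast hc
      have hcp : ∀ m : ℤ, m ∣ 30 → 0 < m → (V:ℤ) ∣ m * k → (V:ℤ) ∣ k := by
        intro m hm _ hdvd
        have hco : IsCoprime (V:ℤ) (30:ℤ) := by
          rw [Int.isCoprime_iff_gcd_eq_one]
          exact_mod_cast hcop
        have hcm : IsCoprime (V:ℤ) m := hco.of_isCoprime_of_dvd_right hm
        exact hcm.dvd_of_dvd_mul_left hdvd
      exact aux_key (V:ℤ) k (z 0) (z 1) (z 2) (z 3) (by exact_mod_cast hV) hcp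
        hpos (by omega) hVz0 hVz1 hVz2 hVz3 (by omega)
end
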